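/- (Deterministic core of Lemma 4.1) Fix p₁,…,p_s ∈ [0,1], a set I ⊆ {1,…,s} of true indices, nondecreasing constants α₁ ≤ ⋯ ≤ α_s, and γ ∈ [0,1). Apply the stepup procedure; suppose exactly j hypotheses are rejected (j ≥ 1) and at least m(j) = ⌊γj⌋ + 1 of them are true (i.e. FDP > γ). Then, setting k = j - s + |I|, we have |I| ≥ m(j) and q₍(k ∨ m(j))₎ ≤ α_j, where q₍ᵢ₎ is the i-th smallest of (pᵢ)_{i∈I} and x∨y = max(x,y). -/

import Mathlib

open MeasureTheory Finset
open scoped Classical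

/-- `orderStat p k` is the `k`-th smallest value (1-indexed) among `p 0, …, p (n-1)`. -/
noncomputable def orderStat {n : ℕ} (p : Fin n → ℝ) (k : ℕ) : ℝ :=
  if h : k - 1 < n then p (Tuple.sort p ⟨k - 1, h⟩) else 0

/-- The number of rejections of the stepup procedure with critical values
`c 1 ≤ … ≤ c n` (1-indexed): the largest `j` with `p_(j) ≤ c j` (0 if none). -/
noncomputable def numReject {n : ℕ} (c : ℕ → ℝ) (p : Fin n → ℝ) : ℕ :=
  ((Finset.Icc 1 n).filter (fun j => orderStat p j ≤ c j)).sup id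

/-- The indices rejected by the stepup procedure: those carrying the
`numReject c p` smallest p-values (via the sorting permutation). -/
noncomputable def rejectedSet {n : ℕ} (c : ℕ → ℝ) (p : Fin n → ℝ) : Finset (Fin n) :=
  (Finset.univ.filter (fun j : Fin n => (j : ℕ) + 1 ≤ numReject c p)).image (Tuple.sort p)

/-- The `k`-th smallest (1-indexed) of the p-values with indices in `I`. -/
noncomputable def trueOrderStat {n : ℕ} (I : Finset (Fin n)) (p : Fin n → ℝ) (k : ℕ) : ℝ :=
  orderStat (fun j : Fin I.card => p (I.orderIsoOfFin rfl j).1) k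
/-- If at least `t ≥ 1` of the values of `q` are `≤ x`, then the `t`-th order
statistic of `q` is `≤ x`. -/
lemma orderStat_le_of_count {n : ℕ} (q : Fin n → ℝ) (x : ℝ) (t : ℕ) (ht : 1 ≤ t)
    (hcard : t ≤ (Finset.univ.filter (fun a : Fin n => q a ≤ x)).card) :
    orderStat q t ≤ x := by
  have htn : t ≤ n := hcard.trans ((Finset.card_filter_le _ _).trans (by simp))
  have h : t - 1 < n := by omega
  rw [orderStat, dif_pos h]
  have hmono := Tuple.monotone_sort q
  have hcard2 : Fintype.card {i : Fin n // (q ∘ Tuple.sort q) i ≤ x}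
      = (Finset.univ.filter (fun a : Fin n => q a ≤ x)).card := by
    show Fintype.card {i : Fin n // (q ∘ Tuple.sort q) i ≤ x} = _
    rw [Fintype.card_subtype]
    apply Finset.card_bij (fun a _ => Tuple.sort q a)
    · intro a ha; simp only [Finset.mem_filter, Finset.mem_univ, true_and] at ha ⊢; exact ha
    · intro a _ b _ hab; exact (Tuple.sort q).injective hab
    · intro b hb; exact ⟨(Tuple.sort q).symm b, by simpa using (Finset.mem_filter.mp hb).2, by simp⟩
  have := (Tuple.lt_card_le_iff_apply_le_of_monotone (f := q ∘ Tuple.sort q) (a := x) (j := ⟨t-1, h⟩) hmono).mp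
  apply this
  rw [← Fintype.card_subtype, hcard2]
  simpa using (by omega : t - 1 < t).trans_le hcard


/-- Deterministic core of Lemma 4.1: if the stepup procedure rejects exactly
`j ≥ 1` hypotheses and at least `m(j) = ⌊γj⌋ + 1` of them are true (FDP > γ),
then `|I| ≥ m(j)` and `q_((j-s+|I|) ∨ m(j)) ≤ α_j` (the truncated subtraction
`j + |I| - s` realizes `k = j - s + |I|` inside the max). -/
theorem stmt13 {s : ℕ} (p : Fin s → ℝ) (hval : ∀ i, p i ∈ Set.Icc (0 : ℝ) 1)
    (I : Finset (Fin s)) (γ : ℝ) (hγ : γ ∈ Set.Ico (0 : ℝ) 1)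
    (c : ℕ → ℝ) (hc : ∀ i j, 1 ≤ i → i ≤ j → j ≤ s → c i ≤ c j)
    (j : ℕ) (hj : numReject c p = j) (hj1 : 1 ≤ j)
    (htrue : Nat.floor (γ * (j : ℝ)) + 1 ≤ (rejectedSet c p ∩ I).card) :
    Nat.floor (γ * (j : ℝ)) + 1 ≤ I.card ∧
      trueOrderStat I p (max (j + I.card - s) (Nat.floor (γ * (j : ℝ)) + 1)) ≤ c j := by
  set m := Nat.floor (γ * (j : ℝ)) + 1 with hm
  have hsubI : rejectedSet c p ∩ I ⊆ I := Finset.inter_subset_right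
  have hIcard : m ≤ I.card := htrue.trans (Finset.card_le_card hsubI)
  -- j is attained in the filter defining numReject
  have hne : (((Finset.Icc 1 s).filter (fun i => orderStat p i ≤ c i))).Nonempty := by
    by_contra hemp
    rw [Finset.not_nonempty_iff_eq_empty] at hemp
    rw [numReject, hemp] at hj
    simp at hj; omega
  obtain ⟨b, hbmem, hbeq⟩ := Finset.exists_mem_eq_sup _ hne id
  rw [numReject] at hj
  rw [hj] at hbeq
  simp only [id] at hbeq
  subst hbeq
  rw [Finset.mem_filter, Finset.mem_Icc] at hbmem
  obtain ⟨⟨_, hjs⟩, hstat⟩ := hbmem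
  -- every rejected p-value is ≤ c j
  have hjlt : j - 1 < s := by omega
  have hnum : numReject c p = j := by rw [numReject, hj]
  have hrej : ∀ i ∈ rejectedSet c p, p i ≤ c j := by
    intro i hi
    rw [rejectedSet, Finset.mem_image] at hi
    obtain ⟨b, hb, rfl⟩ := hi
    simp only [Finset.mem_filter, Finset.mem_univ, true_and, hnum] at hb
    have hble : b ≤ (⟨j - 1, hjlt⟩ : Fin s) := by
      simp only [Fin.le_def, Fin.val_mk]; omega
    calc p (Tuple.sort p b) ≤ p (Tuple.sort p ⟨j - 1, hjlt⟩) :=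
          Tuple.monotone_sort p hble
      _ = orderStat p j := by rw [orderStat, dif_pos hjlt]
      _ ≤ c j := hstat
  -- the rejected set has exactly j elements
  have hRcard : (rejectedSet c p).card = j := by
    rw [rejectedSet, Finset.card_image_of_injective _ (Tuple.sort p).injective, hnum]
    have : (Finset.univ.filter (fun b : Fin s => (b : ℕ) + 1 ≤ j))
        = Finset.Iic (⟨j - 1, hjlt⟩ : Fin s) := by
      ext b
      simp only [Finset.mem_filter, Finset.mem_univ, true_and, Finset.mem_Iic, Fin.le_def, Fin.val_mk]
      omega
    rw [this, Fin.card_Iic]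
    simp only [Fin.val_mk]
    omega
  -- at least j + |I| - s rejected hypotheses are true
  have hinter : j + I.card - s ≤ (rejectedSet c p ∩ I).card := by
    have h1 := Finset.card_union_add_card_inter (rejectedSet c p) I
    have h2 : (rejectedSet c p ∪ I).card ≤ s := by
      simpa using Finset.card_le_card (Finset.subset_univ (rejectedSet c p ∪ I))
    rw [hRcard] at h1
    omega
  refine ⟨hIcard, ?_⟩
  set e := I.orderIsoOfFin rfl with he
  have hIpos : 0 < I.card := by omega
  set t := max (j + I.card - s) m with htdef
  -- count of true p-values below c j
  have hcount : t ≤ (Finset.univ.filter (fun a : Fin I.card => p (e a).1 ≤ c j)).card := by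
    have hle : (rejectedSet c p ∩ I).card
        ≤ (Finset.univ.filter (fun a : Fin I.card => p (e a).1 ≤ c j)).card := by
      apply Finset.card_le_card_of_injOn
        (fun i => if h : i ∈ I then e.symm ⟨i, h⟩ else ⟨0, hIpos⟩)
      · intro i hi
        have hiI : i ∈ I := (Finset.mem_inter.mp hi).2
        have hiR : i ∈ rejectedSet c p := (Finset.mem_inter.mp hi).1
        simp only [dif_pos hiI, Finset.mem_coe, Finset.mem_filter, Finset.mem_univ, true_and,
          OrderIso.apply_symm_apply]
        exact hrej i hiR
      · intro i hi i' hi' hf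
        have hiI : i ∈ I := (Finset.mem_inter.mp hi).2
        have hiI' : i' ∈ I := (Finset.mem_inter.mp hi').2
        simp only [dif_pos hiI, dif_pos hiI'] at hf
        have := congrArg e hf
        rw [OrderIso.apply_symm_apply, OrderIso.apply_symm_apply] at this
        exact congrArg Subtype.val this
    exact le_trans (max_le hinter htrue) hle
  rw [trueOrderStat]
  exact orderStat_le_of_count _ _ _ (le_trans (by omega) (le_max_right _ m)) hcount
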